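/- arXiv:0910.5453 — 3 statements merged into one kernel-verified Lean document; each statement's English description precedes it below -/
import Mathlib

section
/- For every positive integer m, the polynomial U_m = Σ_{i=1}^{6} [ ((x7-x8)/2 - x_i + S6/6)^m + (-(x7-x8)/2 - x_i + S6/6)^m ] + Σ_{1 ≤ i < j ≤ 6} (x_i + x_j - S6/3)^m, where S6 = x1+...+x6, is invariant under every permutation of x1,...,x6, under the transposition of x7 and x8, and under the reflection r(x) = x - (⟨x,n⟩/4)·n with n = (1,1,1,-1,-1,-1,1,-1) (reflection in the hyperplane x1+x2+x3+x7 = x4+x5+x6+x8); i.e. U_m ∘ g = U_m as polynomials in x1,...,x8 for each such linear map g. -/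
open MvPolynomial

noncomputable section

/-- `S6 = x₁ + ⋯ + x₆` inside the eight variables `x₁,…,x₈`. -/
def S6 : MvPolynomial (Fin 8) ℚ := X 0 + X 1 + X 2 + X 3 + X 4 + X 5

/-- The normal vector `n = (1,1,1,-1,-1,-1,1,-1)` of the mirror
`x₁+x₂+x₃+x₇ = x₄+x₅+x₆+x₈`. -/
def nE6 : Fin 8 → ℚ := ![1, 1, 1, -1, -1, -1, 1, -1]

/-- The matrix of the reflection `r(x) = x - (⟨x,n⟩/4)·n`. -/
def RE6 : Matrix (Fin 8) (Fin 8) ℚ :=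
  fun i j => (if i = j then 1 else 0) - nE6 i * nE6 j / 4

/-- Action of the linear map with matrix `M` on a polynomial: `P ↦ P ∘ M`,
i.e. substitute `xᵢ ↦ ∑ⱼ Mᵢⱼ xⱼ`. -/
def applyLin {n : ℕ} (M : Matrix (Fin n) (Fin n) ℚ) (P : MvPolynomial (Fin n) ℚ) :
    MvPolynomial (Fin n) ℚ :=
  aeval (fun i => ∑ j : Fin n, C (M i j) * X j) P

/-- The `E₆`-invariant polynomial `U_m`. -/
def U (m : ℕ) : MvPolynomial (Fin 8) ℚ :=
  (∑ i ∈ Finset.univ.filter (fun i : Fin 8 => i.val < 6),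
      ((C (1/2 : ℚ) * (X 6 - X 7) - X i + C (1/6 : ℚ) * S6) ^ m +
        (-(C (1/2 : ℚ) * (X 6 - X 7)) - X i + C (1/6 : ℚ) * S6) ^ m)) +
    ∑ p ∈ Finset.univ.filter (fun p : Fin 8 × Fin 8 => p.1.val < p.2.val ∧ p.2.val < 6),
      (X p.1 + X p.2 - C (1/3 : ℚ) * S6) ^ m


lemma perm_lt6 (τ : Equiv.Perm (Fin 8)) (h6 : τ 6 = 6) (h7 : τ 7 = 7) :
    ∀ i : Fin 8, i.val < 6 → (τ i).val < 6 := by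
  intro i hi
  by_contra hc
  have h8 := (τ i).isLt
  have hor : τ i = 6 ∨ τ i = 7 := by
    rcases Nat.lt_or_ge ((τ i) : ℕ) 7 with h | h
    · exact Or.inl (Fin.ext (by simpa using by omega))
    · exact Or.inr (Fin.ext (by simpa using by omega))
  rcases hor with h | h
  · have : i = 6 := τ.injective (by rw [h, h6])
    rw [this] at hi; exact absurd hi (by decide)
  · have : i = 7 := τ.injective (by rw [h, h7])
    rw [this] at hi; exact absurd hi (by decide)

set_option maxHeartbeats 2000000 in
lemma U_refl (m : ℕ) : applyLin RE6 (U m) = U m := by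
  apply MvPolynomial.funext
  intro x
  simp only [U, applyLin, S6, map_add, map_sub, map_neg, map_mul, map_pow, map_sum,
    aeval_X, aeval_C, eval_X, eval_C, algebraMap_eq,
    Finset.sum_filter, Fintype.sum_prod_type, Fin.sum_univ_eight, apply_ite, map_zero]
  norm_num [RE6, show nE6 0 = 1 from rfl, show nE6 1 = 1 from rfl, show nE6 2 = 1 from rfl,
    show nE6 3 = -1 from rfl, show nE6 4 = -1 from rfl, show nE6 5 = -1 from rfl,
    show nE6 6 = 1 from rfl, show nE6 7 = -1 from rfl,
    show ((3:Fin 8):ℕ) = 3 from rfl, show ((4:Fin 8):ℕ) = 4 from rfl,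
    show ((5:Fin 8):ℕ) = 5 from rfl, show ((6:Fin 8):ℕ) = 6 from rfl,
    show ((7:Fin 8):ℕ) = 7 from rfl, Fin.ext_iff]
  ring

set_option maxHeartbeats 1000000 in
lemma U_swap (m : ℕ) : rename (Equiv.swap (6 : Fin 8) 7) (U m) = U m := by
  apply MvPolynomial.funext
  intro x
  rw [eval_rename]
  simp only [U, S6, map_add, map_sub, map_neg, map_mul, map_pow, map_sum,
    eval_X, eval_C, Function.comp,
    Finset.sum_filter, Fintype.sum_prod_type, Fin.sum_univ_eight]
  norm_num [Equiv.swap_apply_def,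
    show ((3:Fin 8):ℕ) = 3 from rfl, show ((4:Fin 8):ℕ) = 4 from rfl,
    show ((5:Fin 8):ℕ) = 5 from rfl, show ((6:Fin 8):ℕ) = 6 from rfl,
    show ((7:Fin 8):ℕ) = 7 from rfl, Fin.ext_iff]
  ring

set_option synthInstance.maxHeartbeats 1000000 in
lemma U_perm (m : ℕ) (σ : Equiv.Perm (Fin 8)) (h6 : σ 6 = 6) (h7 : σ 7 = 7) :
    rename σ (U m) = U m := by
  have h6' : σ.symm 6 = 6 := by rw [Equiv.symm_apply_eq, h6]
  have h7' : σ.symm 7 = 7 := by rw [Equiv.symm_apply_eq, h7]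
  have hlt := perm_lt6 σ h6 h7
  have hlt' := perm_lt6 σ.symm h6' h7'
  have hmem : ∀ i : Fin 8, i ∈ Finset.univ.filter (fun i : Fin 8 => i.val < 6) ↔
      σ i ∈ Finset.univ.filter (fun i : Fin 8 => i.val < 6) := by
    intro i
    simp only [Finset.mem_filter, Finset.mem_univ, true_and]
    exact ⟨hlt i, fun h => by simpa using hlt' (σ i) h⟩
  have hS6 : rename σ S6 = S6 := by
    have h1 : (S6 : MvPolynomial (Fin 8) ℚ) =
        ∑ i ∈ Finset.univ.filter (fun i : Fin 8 => i.val < 6), X i := by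
      rw [Finset.sum_filter, Fin.sum_univ_eight]
      norm_num [S6, show ((3:Fin 8):ℕ) = 3 from rfl, show ((4:Fin 8):ℕ) = 4 from rfl,
        show ((5:Fin 8):ℕ) = 5 from rfl, show ((6:Fin 8):ℕ) = 6 from rfl,
        show ((7:Fin 8):ℕ) = 7 from rfl]
    rw [h1, map_sum]
    simp only [rename_X]
    exact Finset.sum_equiv σ hmem (fun i _ => rfl)
  conv_lhs => rw [U]
  rw [map_add, map_sum, map_sum]
  simp only [map_add, map_pow, map_sub, map_neg, map_mul, rename_X, rename_C, hS6, h6, h7]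
  rw [U]
  congr 1
  · exact Finset.sum_equiv σ hmem (fun i _ => rfl)
  · set P := Finset.univ.filter (fun p : Fin 8 × Fin 8 => p.1.val < p.2.val ∧ p.2.val < 6) with hP
    set P' := Finset.univ.filter
      (fun p : Fin 8 × Fin 8 => p.1 ≠ p.2 ∧ p.1.val < 6 ∧ p.2.val < 6) with hP'
    set Psw := Finset.univ.filter
      (fun p : Fin 8 × Fin 8 => p.2.val < p.1.val ∧ p.1.val < 6) with hPsw
    set g : Fin 8 → Fin 8 → MvPolynomial (Fin 8) ℚ :=
      fun a b => (X a + X b - C (1/3 : ℚ) * S6) ^ m with hg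
    have hgsym : ∀ a b, g b a = g a b := by
      intro a b; rw [hg]; dsimp only; rw [add_comm (X b) (X a)]
    show ∑ p ∈ P, g (σ p.1) (σ p.2) = ∑ p ∈ P, g p.1 p.2
    have hdouble : ∀ (h : Fin 8 → Fin 8 → MvPolynomial (Fin 8) ℚ), (∀ a b, h b a = h a b) →
        ∑ p ∈ P', h p.1 p.2 = ∑ p ∈ P, h p.1 p.2 + ∑ p ∈ P, h p.1 p.2 := by
      intro h hsym
      have hu : P' = P ∪ Psw := by rw [hP', hP, hPsw]; decide
      have hdisj : Disjoint P Psw := by rw [hP, hPsw]; decide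
      rw [hu, Finset.sum_union hdisj]
      congr 1
      refine Finset.sum_equiv (Equiv.prodComm (Fin 8) (Fin 8)) ?_ ?_
      · intro p
        simp only [hP, hPsw, Finset.mem_filter, Finset.mem_univ, true_and, Equiv.prodComm_apply,
          Prod.fst_swap, Prod.snd_swap]
        try omega
      · intro p _
        simp only [Equiv.prodComm_apply, Prod.fst_swap, Prod.snd_swap]
        exact (hsym p.1 p.2).symm
    have hmem2 : ∀ p : Fin 8 × Fin 8, p ∈ P' ↔ (Equiv.prodCongr σ σ) p ∈ P' := by
      intro p
      simp only [hP', Finset.mem_filter, Finset.mem_univ, true_and, Equiv.prodCongr_apply,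
        Prod.map_fst, Prod.map_snd]
      constructor
      · rintro ⟨hne, ha, hb⟩
        exact ⟨fun hh => hne (σ.injective hh), hlt _ ha, hlt _ hb⟩
      · rintro ⟨hne, ha, hb⟩
        refine ⟨fun hh => hne (by rw [hh]), ?_, ?_⟩
        · simpa using hlt' _ ha
        · simpa using hlt' _ hb
    have e1 : ∑ p ∈ P', g (σ p.1) (σ p.2) = ∑ p ∈ P', g p.1 p.2 :=
      Finset.sum_equiv (Equiv.prodCongr σ σ) hmem2 (fun p _ => rfl)
    have big := hdouble (fun a b => g (σ a) (σ b)) (fun a b => hgsym (σ a) (σ b))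
    have big2 := hdouble g hgsym
    have h2 : (∑ p ∈ P, g (σ p.1) (σ p.2)) + (∑ p ∈ P, g (σ p.1) (σ p.2)) =
        (∑ p ∈ P, g p.1 p.2) + (∑ p ∈ P, g p.1 p.2) := by
      rw [← big, ← big2]; exact e1
    have h3 : (2 : ℚ) • (∑ p ∈ P, g (σ p.1) (σ p.2)) = (2 : ℚ) • (∑ p ∈ P, g p.1 p.2) := by
      rw [two_smul, two_smul]; exact h2
    exact smul_right_injective (MvPolynomial (Fin 8) ℚ) (by norm_num) h3

/-- For every positive `m`, `U_m` is invariant under the reflection in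
`x₁+x₂+x₃+x₇ = x₄+x₅+x₆+x₈`, under every permutation of `x₁,…,x₆`, and under
the transposition of `x₇` and `x₈`. -/
theorem U_invariant (m : ℕ) (hm : 0 < m) :
    applyLin RE6 (U m) = U m ∧
    (∀ σ : Equiv.Perm (Fin 8), σ 6 = 6 → σ 7 = 7 → rename σ (U m) = U m) ∧
    rename (Equiv.swap (6 : Fin 8) 7) (U m) = U m := by
  exact ⟨U_refl m, fun σ h6 h7 => U_perm m σ h6 h7, U_swap m⟩
end
end

section
/- For every even positive integer m, the polynomial W_m = Σ_{1 ≤ i < j ≤ 9} (x_i - x_j)^m + Σ_{1 ≤ i < j < k ≤ 9} (S8/3 - x_i - x_j - x_k)^m, where S8 = x1+...+x9, is invariant under every permutation of x1,...,x8 and under the reflection r(x) = x - (⟨x,n⟩/9)·n with n = (2,2,2,-1,-1,-1,-1,-1,-1) (reflection in the hyperplane 2x1+2x2+2x3 = x4+...+x9); i.e. W_m ∘ g = W_m as polynomials in x1,...,x9 for each such linear map g. -/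
open MvPolynomial

noncomputable section

/-- `S8 = x₁ + ⋯ + x₉`. -/
def S8 : MvPolynomial (Fin 9) ℚ := ∑ i : Fin 9, X i

/-- The normal vector `n = (2,2,2,-1,-1,-1,-1,-1,-1)` of the mirror
`2x₁+2x₂+2x₃ = x₄+⋯+x₉`. -/
def nE8 : Fin 9 → ℚ := ![2, 2, 2, -1, -1, -1, -1, -1, -1]

/-- The matrix of the reflection `r(x) = x - (⟨x,n⟩/9)·n`. -/
def RE8 : Matrix (Fin 9) (Fin 9) ℚ :=
  fun i j => (if i = j then 1 else 0) - nE8 i * nE8 j / 9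

/-- The `E₈`-invariant polynomial `W_m`. -/
def W (m : ℕ) : MvPolynomial (Fin 9) ℚ :=
  (∑ p ∈ Finset.univ.filter (fun p : Fin 9 × Fin 9 => p.1 < p.2),
      (X p.1 - X p.2) ^ m) +
    ∑ p ∈ Finset.univ.filter
        (fun p : Fin 9 × Fin 9 × Fin 9 => p.1 < p.2.1 ∧ p.2.1 < p.2.2),
      (C (1/3 : ℚ) * S8 - X p.1 - X p.2.1 - X p.2.2) ^ m

/-! ### Integer vector machinery -/

abbrev VecZ := Fin 9 → ℤ

def nZ : Fin 9 → ℤ := ![2, 2, 2, -1, -1, -1, -1, -1, -1]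
def RZ : Fin 9 → Fin 9 → ℤ := fun i j => 9 * (if i = j then 1 else 0) - nZ i * nZ j
def vPZ (p : Fin 9 × Fin 9) : VecZ :=
  fun i => 3 * ((if p.1 = i then 1 else 0) - (if p.2 = i then 1 else 0))
def vTZ (t : Fin 9 × Fin 9 × Fin 9) : VecZ :=
  fun i => 1 - 3 * ((if t.1 = i then 1 else 0) + (if t.2.1 = i then 1 else 0)
      + (if t.2.2 = i then 1 else 0))
def rvZ (c : VecZ) : VecZ := fun j => ∑ i, c i * RZ i j
def encZ (c : VecZ) : ℤ := ∑ i, c i * 100 ^ (i : ℕ)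
def nrmZ (c : VecZ) : VecZ := if encZ c < 0 then fun i => - c i else c

def PP : Finset (Fin 9 × Fin 9) := Finset.univ.filter (fun p => p.1 < p.2)
def TT : Finset (Fin 9 × Fin 9 × Fin 9) :=
  Finset.univ.filter (fun t => t.1 < t.2.1 ∧ t.2.1 < t.2.2)

set_option maxRecDepth 100000 in
theorem key :
    (PP.val.map (fun p => nrmZ (rvZ (vPZ p))) + TT.val.map (fun t => nrmZ (rvZ (vTZ t))))
    = (PP.val.map (fun p => nrmZ (fun i => 9 * vPZ p i))
        + TT.val.map (fun t => nrmZ (fun i => 9 * vTZ t i))) := by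
  decide

/-! ### Linear forms -/

def LfZ (c : VecZ) : MvPolynomial (Fin 9) ℚ := ∑ i, C ((c i : ℚ)) * X i

lemma LfZ_neg (c : VecZ) : LfZ (fun i => - c i) = - LfZ c := by
  simp [LfZ, Finset.sum_neg_distrib]

lemma sum_ite_X (a : Fin 9) :
    (∑ i, if a = i then (X i : MvPolynomial (Fin 9) ℚ) else 0) = X a := by
  rw [Finset.sum_ite_eq]
  simp

lemma LfZ_vPZ (p : Fin 9 × Fin 9) : LfZ (vPZ p) = C 3 * (X p.1 - X p.2) := by
  unfold LfZ vPZ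
  have : ∀ i : Fin 9,
      C (((3 * ((if p.1 = i then 1 else 0) - (if p.2 = i then 1 else 0)) : ℤ) : ℚ)) * X i
        = C 3 * ((if p.1 = i then (X i : MvPolynomial (Fin 9) ℚ) else 0)
            - (if p.2 = i then X i else 0)) := by
    intro i
    split_ifs <;> simp [map_ofNat] <;> ring
  rw [Finset.sum_congr rfl (fun i _ => this i)]
  rw [← Finset.mul_sum, Finset.sum_sub_distrib, sum_ite_X, sum_ite_X]

lemma LfZ_vTZ (t : Fin 9 × Fin 9 × Fin 9) :
    LfZ (vTZ t) = S8 - C 3 * X t.1 - C 3 * X t.2.1 - C 3 * X t.2.2 := by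
  unfold LfZ vTZ
  have : ∀ i : Fin 9,
      C (((1 - 3 * ((if t.1 = i then 1 else 0) + (if t.2.1 = i then 1 else 0)
          + (if t.2.2 = i then 1 else 0)) : ℤ) : ℚ)) * X i
        = X i - C 3 * (if t.1 = i then (X i : MvPolynomial (Fin 9) ℚ) else 0)
            - C 3 * (if t.2.1 = i then X i else 0)
            - C 3 * (if t.2.2 = i then X i else 0) := by
    intro i
    split_ifs <;> simp [map_ofNat] <;> ring
  rw [Finset.sum_congr rfl (fun i _ => this i)]
  rw [Finset.sum_sub_distrib, Finset.sum_sub_distrib, Finset.sum_sub_distrib,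
    ← Finset.mul_sum, ← Finset.mul_sum, ← Finset.mul_sum,
    sum_ite_X, sum_ite_X, sum_ite_X]
  rfl

lemma LfZ_mul9 (c : VecZ) : LfZ (fun i => 9 * c i) = C 9 * LfZ c := by
  simp [LfZ, Finset.mul_sum]
  refine Finset.sum_congr rfl fun i _ => by push_cast; ring

lemma LfZ_nrmZ_pow (c : VecZ) {m : ℕ} (hme : Even m) :
    LfZ (nrmZ c) ^ m = LfZ c ^ m := by
  unfold nrmZ
  split_ifs with h
  · rw [LfZ_neg, hme.neg_pow]
  · rfl

lemma nE8_cast (i : Fin 9) : nE8 i = ((nZ i : ℤ) : ℚ) := by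
  fin_cases i <;> norm_num [nE8, nZ]

lemma applyLin_LfZ (c : VecZ) :
    applyLin RE8 (LfZ c) = C (9 : ℚ)⁻¹ * LfZ (rvZ c) := by
  unfold applyLin LfZ
  rw [map_sum]
  simp only [map_mul, aeval_C, aeval_X, algebraMap_eq, Finset.mul_sum]
  rw [Finset.sum_comm]
  refine Finset.sum_congr rfl fun j _ => ?_
  have h1 : ∀ i : Fin 9, C ((c i : ℚ)) * (C (RE8 i j) * X j)
      = C ((c i : ℚ) * RE8 i j) * X j := by
    intro i; rw [C_mul]; ring
  rw [Finset.sum_congr rfl (fun i _ => h1 i), ← Finset.sum_mul, ← map_sum C]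
  have h2 : (∑ i, (c i : ℚ) * RE8 i j) = (9:ℚ)⁻¹ * ((rvZ c j : ℤ) : ℚ) := by
    unfold rvZ RZ
    push_cast
    rw [Finset.mul_sum]
    refine Finset.sum_congr rfl fun i _ => ?_
    rw [RE8]
    simp only [nE8_cast]
    split_ifs <;> push_cast <;> ring
  rw [h2, C_mul]
  ring

lemma rename_LfZ (σ : Equiv.Perm (Fin 9)) (c : VecZ) :
    rename σ (LfZ c) = LfZ (fun i => c (σ.symm i)) := by
  unfold LfZ
  rw [map_sum]
  simp only [map_mul, rename_C, rename_X]
  rw [← Equiv.sum_comp σ (fun j => C ((c (σ.symm j) : ℤ) : ℚ) * X j)]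
  simp

lemma rename_C' (σ : Equiv.Perm (Fin 9)) (q : ℚ) :
    rename σ (C q : MvPolynomial (Fin 9) ℚ) = C q := rename_C σ q

lemma Wform (m : ℕ) :
    W m = C ((3:ℚ)⁻¹) ^ m *
      ((∑ p ∈ PP, LfZ (vPZ p) ^ m) + ∑ t ∈ TT, LfZ (vTZ t) ^ m) := by
  unfold W
  rw [mul_add, Finset.mul_sum, Finset.mul_sum]
  refine congrArg₂ (· + ·) ?_ ?_
  · refine Finset.sum_congr rfl fun p _ => ?_
    rw [← mul_pow, LfZ_vPZ, ← mul_assoc, ← C_mul]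
    norm_num
  · refine Finset.sum_congr rfl fun t _ => ?_
    rw [← mul_pow, LfZ_vTZ]
    congr 1
    have h3 : (C ((3:ℚ)⁻¹) * C (3:ℚ) : MvPolynomial (Fin 9) ℚ) = 1 := by
      rw [← C_mul]; norm_num
    rw [show (1/3:ℚ) = 3⁻¹ from by norm_num, mul_sub, mul_sub, mul_sub,
      ← mul_assoc, ← mul_assoc, ← mul_assoc, h3, one_mul, one_mul, one_mul]

/-! ### Symmetric sums over pairs and triples -/

def PPs : Finset (Fin 9 × Fin 9) := Finset.univ.filter (fun p => p.2 < p.1)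
def D2 : Finset (Fin 9 × Fin 9) := Finset.univ.filter (fun p => p.1 ≠ p.2)

lemma D2_eq : D2 = PP ∪ PPs := by
  ext ⟨a, b⟩
  simp only [D2, PP, PPs, Finset.mem_filter, Finset.mem_union, Finset.mem_univ, true_and]
  omega

lemma D2_disj : Disjoint PP PPs := by
  rw [Finset.disjoint_left]
  rintro ⟨a, b⟩ h1 h2
  simp [PP, PPs, Finset.mem_filter] at h1 h2
  omega

variable {M : Type*} [AddCommGroup M] [Module ℚ M]

lemma nsmul_cancel {n : ℕ} (hn : (n:ℚ) ≠ 0) {a b : M} (h : n • a = n • b) : a = b := by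
  have h' : (n:ℚ) • a = (n:ℚ) • b := by
    rw [Nat.cast_smul_eq_nsmul, Nat.cast_smul_eq_nsmul]; exact h
  calc a = (n:ℚ)⁻¹ • ((n:ℚ) • a) := (inv_smul_smul₀ hn a).symm
    _ = (n:ℚ)⁻¹ • ((n:ℚ) • b) := by rw [h']
    _ = b := inv_smul_smul₀ hn b

lemma sum_D2 (g : Fin 9 → Fin 9 → M) (hs : ∀ i j, g i j = g j i) :
    ∑ p ∈ D2, g p.1 p.2 = 2 • ∑ p ∈ PP, g p.1 p.2 := by
  rw [D2_eq, Finset.sum_union D2_disj, two_smul]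
  congr 1
  refine Finset.sum_nbij' (fun p => (p.2, p.1)) (fun p => (p.2, p.1)) ?_ ?_ ?_ ?_ ?_
    <;> simp [PP, PPs, Finset.mem_filter]
  intro a b _; exact hs a b

lemma sum_D2_perm (g : Fin 9 → Fin 9 → M) (σ : Equiv.Perm (Fin 9)) :
    ∑ p ∈ D2, g (σ p.1) (σ p.2) = ∑ p ∈ D2, g p.1 p.2 := by
  refine Finset.sum_nbij' (fun p => (σ p.1, σ p.2)) (fun p => (σ.symm p.1, σ.symm p.2))
    ?_ ?_ ?_ ?_ ?_ <;> simp [D2, Finset.mem_filter]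

lemma pair_perm (g : Fin 9 → Fin 9 → M) (hs : ∀ i j, g i j = g j i)
    (σ : Equiv.Perm (Fin 9)) :
    ∑ p ∈ PP, g (σ p.1) (σ p.2) = ∑ p ∈ PP, g p.1 p.2 := by
  refine nsmul_cancel (n := 2) (by norm_num) ?_
  rw [← sum_D2 (fun i j => g (σ i) (σ j)) (fun i j => hs _ _), ← sum_D2 g hs]
  exact sum_D2_perm g σ

abbrev Tr := Fin 9 × Fin 9 × Fin 9
def T2 : Finset Tr := Finset.univ.filter (fun t => t.1 < t.2.2 ∧ t.2.2 < t.2.1)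
def T3 : Finset Tr := Finset.univ.filter (fun t => t.2.1 < t.1 ∧ t.1 < t.2.2)
def T4 : Finset Tr := Finset.univ.filter (fun t => t.2.1 < t.2.2 ∧ t.2.2 < t.1)
def T5 : Finset Tr := Finset.univ.filter (fun t => t.2.2 < t.1 ∧ t.1 < t.2.1)
def T6 : Finset Tr := Finset.univ.filter (fun t => t.2.2 < t.2.1 ∧ t.2.1 < t.1)
def D3 : Finset Tr :=
  Finset.univ.filter (fun t => t.1 ≠ t.2.1 ∧ t.1 ≠ t.2.2 ∧ t.2.1 ≠ t.2.2)

lemma D3_eq : D3 = TT ∪ (T2 ∪ (T3 ∪ (T4 ∪ (T5 ∪ T6)))) := by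
  ext ⟨a, b, c⟩
  simp [D3, TT, T2, T3, T4, T5, T6, Finset.mem_filter, Finset.mem_union]
  omega

lemma d1 : Disjoint TT (T2 ∪ (T3 ∪ (T4 ∪ (T5 ∪ T6)))) := by
  rw [Finset.disjoint_left]
  rintro ⟨a, b, c⟩ h1 h2
  simp [TT, T2, T3, T4, T5, T6, Finset.mem_filter, Finset.mem_union] at h1 h2
  omega

lemma d2 : Disjoint T2 (T3 ∪ (T4 ∪ (T5 ∪ T6))) := by
  rw [Finset.disjoint_left]
  rintro ⟨a, b, c⟩ h1 h2
  simp [T2, T3, T4, T5, T6, Finset.mem_filter, Finset.mem_union] at h1 h2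
  omega

lemma d3 : Disjoint T3 (T4 ∪ (T5 ∪ T6)) := by
  rw [Finset.disjoint_left]
  rintro ⟨a, b, c⟩ h1 h2
  simp [T3, T4, T5, T6, Finset.mem_filter, Finset.mem_union] at h1 h2
  omega

lemma d4 : Disjoint T4 (T5 ∪ T6) := by
  rw [Finset.disjoint_left]
  rintro ⟨a, b, c⟩ h1 h2
  simp [T4, T5, T6, Finset.mem_filter, Finset.mem_union] at h1 h2
  omega

lemma d5 : Disjoint T5 T6 := by
  rw [Finset.disjoint_left]
  rintro ⟨a, b, c⟩ h1 h2
  simp [T5, T6, Finset.mem_filter] at h1 h2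
  omega

section TripleSums

variable {M : Type*} [AddCommGroup M] [Module ℚ M]
variable (g : Fin 9 → Fin 9 → Fin 9 → M)

lemma sum_T2 (hs : ∀ i j k, g i j k = g i k j) :
    ∑ t ∈ T2, g t.1 t.2.1 t.2.2 = ∑ t ∈ TT, g t.1 t.2.1 t.2.2 := by
  refine Finset.sum_nbij' (fun t => (t.1, t.2.2, t.2.1)) (fun t => (t.1, t.2.2, t.2.1))
    ?_ ?_ ?_ ?_ ?_ <;> simp [T2, TT, Finset.mem_filter]
  intro a b c _ _; exact hs a b c

lemma sum_T3 (hs : ∀ i j k, g i j k = g j i k) :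
    ∑ t ∈ T3, g t.1 t.2.1 t.2.2 = ∑ t ∈ TT, g t.1 t.2.1 t.2.2 := by
  refine Finset.sum_nbij' (fun t => (t.2.1, t.1, t.2.2)) (fun t => (t.2.1, t.1, t.2.2))
    ?_ ?_ ?_ ?_ ?_ <;> simp [T3, TT, Finset.mem_filter]
  intro a b c _ _; exact hs a b c

lemma sum_T4 (hs : ∀ i j k, g i j k = g j k i) :
    ∑ t ∈ T4, g t.1 t.2.1 t.2.2 = ∑ t ∈ TT, g t.1 t.2.1 t.2.2 := by
  refine Finset.sum_nbij' (fun t => (t.2.1, t.2.2, t.1)) (fun t => (t.2.2, t.1, t.2.1))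
    ?_ ?_ ?_ ?_ ?_ <;> simp [T4, TT, Finset.mem_filter]
  intro a b c _ _; exact hs a b c

lemma sum_T5 (hs : ∀ i j k, g i j k = g k i j) :
    ∑ t ∈ T5, g t.1 t.2.1 t.2.2 = ∑ t ∈ TT, g t.1 t.2.1 t.2.2 := by
  refine Finset.sum_nbij' (fun t => (t.2.2, t.1, t.2.1)) (fun t => (t.2.1, t.2.2, t.1))
    ?_ ?_ ?_ ?_ ?_ <;> simp [T5, TT, Finset.mem_filter]
  intro a b c _ _; exact hs a b c

lemma sum_T6 (hs : ∀ i j k, g i j k = g k j i) :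
    ∑ t ∈ T6, g t.1 t.2.1 t.2.2 = ∑ t ∈ TT, g t.1 t.2.1 t.2.2 := by
  refine Finset.sum_nbij' (fun t => (t.2.2, t.2.1, t.1)) (fun t => (t.2.2, t.2.1, t.1))
    ?_ ?_ ?_ ?_ ?_ <;> simp [T6, TT, Finset.mem_filter]
  intro a b c _ _; exact hs a b c

lemma sum_D3 (h12 : ∀ i j k, g i j k = g j i k) (h23 : ∀ i j k, g i j k = g i k j) :
    ∑ t ∈ D3, g t.1 t.2.1 t.2.2 = 6 • ∑ t ∈ TT, g t.1 t.2.1 t.2.2 := by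
  have h13 : ∀ i j k, g i j k = g k j i := fun i j k => by
    rw [h12, h23, h12]
  have h231 : ∀ i j k, g i j k = g j k i := fun i j k => by rw [h12, h23]
  have h312 : ∀ i j k, g i j k = g k i j := fun i j k => by rw [h23, h12]
  rw [D3_eq, Finset.sum_union d1, Finset.sum_union d2, Finset.sum_union d3,
    Finset.sum_union d4, Finset.sum_union d5,
    sum_T2 g h23, sum_T3 g h12, sum_T4 g h231, sum_T5 g h312, sum_T6 g h13]
  abel

lemma sum_D3_perm (σ : Equiv.Perm (Fin 9)) :
    ∑ t ∈ D3, g (σ t.1) (σ t.2.1) (σ t.2.2) = ∑ t ∈ D3, g t.1 t.2.1 t.2.2 := by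
  refine Finset.sum_nbij' (fun t => (σ t.1, σ t.2.1, σ t.2.2))
    (fun t => (σ.symm t.1, σ.symm t.2.1, σ.symm t.2.2)) ?_ ?_ ?_ ?_ ?_
    <;> simp [D3, Finset.mem_filter]

lemma triple_perm (h12 : ∀ i j k, g i j k = g j i k) (h23 : ∀ i j k, g i j k = g i k j)
    (σ : Equiv.Perm (Fin 9)) :
    ∑ t ∈ TT, g (σ t.1) (σ t.2.1) (σ t.2.2) = ∑ t ∈ TT, g t.1 t.2.1 t.2.2 := by
  refine nsmul_cancel (n := 6) (by norm_num) ?_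
  rw [← sum_D3 (fun i j k => g (σ i) (σ j) (σ k)) (fun i j k => h12 _ _ _)
      (fun i j k => h23 _ _ _), ← sum_D3 g h12 h23]
  exact sum_D3_perm g σ

end TripleSums

lemma applyLin_C {n : ℕ} (M : Matrix (Fin n) (Fin n) ℚ) (q : ℚ) :
    applyLin M (C q) = C q := by
  unfold applyLin; rw [aeval_C, algebraMap_eq]

lemma applyLin_mul {n : ℕ} (M : Matrix (Fin n) (Fin n) ℚ) (a b : MvPolynomial (Fin n) ℚ) :
    applyLin M (a * b) = applyLin M a * applyLin M b := map_mul _ a b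

lemma applyLin_add {n : ℕ} (M : Matrix (Fin n) (Fin n) ℚ) (a b : MvPolynomial (Fin n) ℚ) :
    applyLin M (a + b) = applyLin M a + applyLin M b := map_add _ a b

lemma applyLin_pow {n : ℕ} (M : Matrix (Fin n) (Fin n) ℚ) (a : MvPolynomial (Fin n) ℚ)
    (k : ℕ) : applyLin M (a ^ k) = applyLin M a ^ k := map_pow _ a k

lemma applyLin_sum {n : ℕ} {ι : Type*} (M : Matrix (Fin n) (Fin n) ℚ) (s : Finset ι)
    (f : ι → MvPolynomial (Fin n) ℚ) :
    applyLin M (∑ i ∈ s, f i) = ∑ i ∈ s, applyLin M (f i) := map_sum _ f s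


/-- For every even positive `m`, `W_m` is invariant under every permutation of
`x₁,…,x₈` and under the reflection in `2x₁+2x₂+2x₃ = x₄+⋯+x₉`. -/
theorem W_invariant (m : ℕ) (hm : 0 < m) (hme : Even m) :
    (∀ σ : Equiv.Perm (Fin 9), σ 8 = 8 → rename σ (W m) = W m) ∧
    applyLin RE8 (W m) = W m := by
  constructor
  · -- permutation invariance
    intro σ _
    rw [Wform, map_mul, map_pow, rename_C', map_add, map_sum, map_sum]
    simp only [map_pow, rename_LfZ]
    have hvP : ∀ p : Fin 9 × Fin 9,
        (fun i => vPZ p (σ.symm i)) = vPZ (σ p.1, σ p.2) := by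
      intro p; funext i; simp only [vPZ, Equiv.eq_symm_apply]
    have hvT : ∀ t : Tr,
        (fun i => vTZ t (σ.symm i)) = vTZ (σ t.1, σ t.2.1, σ t.2.2) := by
      intro t; funext i; simp only [vTZ, Equiv.eq_symm_apply]
    simp only [hvP, hvT]
    refine congrArg (_ * ·) (congrArg₂ (· + ·) ?_ ?_)
    · exact pair_perm (fun i j => LfZ (vPZ (i, j)) ^ m)
        (fun i j => by
          have h : vPZ (j, i) = fun i' => - vPZ (i, j) i' := by
            funext i'; simp only [vPZ]; ring
          show LfZ (vPZ (i, j)) ^ m = LfZ (vPZ (j, i)) ^ m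
          rw [h, LfZ_neg, hme.neg_pow]) σ
    · exact triple_perm (fun i j k => LfZ (vTZ (i, j, k)) ^ m)
        (fun i j k => by
          show LfZ (vTZ (i, j, k)) ^ m = LfZ (vTZ (j, i, k)) ^ m
          have h : vTZ (j, i, k) = vTZ (i, j, k) := by
            funext i'; simp only [vTZ]; ring
          rw [h])
        (fun i j k => by
          show LfZ (vTZ (i, j, k)) ^ m = LfZ (vTZ (i, k, j)) ^ m
          have h : vTZ (i, k, j) = vTZ (i, j, k) := by
            funext i'; simp only [vTZ]; ring
          rw [h]) σ
  · -- reflection invariance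
    rw [Wform, applyLin_mul, applyLin_pow, applyLin_C, applyLin_add,
      applyLin_sum, applyLin_sum]
    have h9 : ∀ c : VecZ, applyLin RE8 (LfZ c ^ m)
        = C ((9:ℚ)⁻¹) ^ m * LfZ (rvZ c) ^ m := by
      intro c; rw [applyLin_pow, applyLin_LfZ, mul_pow]
    simp only [applyLin_pow]
    have h9' : ∀ c : VecZ, applyLin RE8 (LfZ c) ^ m
        = C ((9:ℚ)⁻¹) ^ m * LfZ (rvZ c) ^ m := by
      intro c; rw [applyLin_LfZ, mul_pow]
    simp only [h9']
    rw [← Finset.mul_sum, ← Finset.mul_sum, ← mul_add]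
    -- now: C 3⁻¹ ^ m * (C 9⁻¹ ^ m * (∑_P LfZ (rvZ (vPZ p)) ^ m + ∑_T LfZ (rvZ (vTZ t)) ^ m))
    have hP1 : (∑ p ∈ PP, LfZ (rvZ (vPZ p)) ^ m)
        = ((PP.val.map (fun p => nrmZ (rvZ (vPZ p)))).map (fun c => LfZ c ^ m)).sum := by
      rw [Finset.sum_eq_multiset_sum, Multiset.map_map]
      refine congrArg Multiset.sum (Multiset.map_congr rfl fun p _ => ?_)
      simp only [Function.comp_apply]
      exact (LfZ_nrmZ_pow _ hme).symm
    have hT1 : (∑ t ∈ TT, LfZ (rvZ (vTZ t)) ^ m)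
        = ((TT.val.map (fun t => nrmZ (rvZ (vTZ t)))).map (fun c => LfZ c ^ m)).sum := by
      rw [Finset.sum_eq_multiset_sum, Multiset.map_map]
      refine congrArg Multiset.sum (Multiset.map_congr rfl fun t _ => ?_)
      simp only [Function.comp_apply]
      exact (LfZ_nrmZ_pow _ hme).symm
    have hP2 : ((PP.val.map (fun p => nrmZ (fun i => 9 * vPZ p i))).map
          (fun c => LfZ c ^ m)).sum
        = ∑ p ∈ PP, (C (9:ℚ) * LfZ (vPZ p)) ^ m := by
      rw [Finset.sum_eq_multiset_sum, Multiset.map_map]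
      refine congrArg Multiset.sum (Multiset.map_congr rfl fun p _ => ?_)
      simp only [Function.comp_apply]
      rw [LfZ_nrmZ_pow _ hme, LfZ_mul9]
    have hT2 : ((TT.val.map (fun t => nrmZ (fun i => 9 * vTZ t i))).map
          (fun c => LfZ c ^ m)).sum
        = ∑ t ∈ TT, (C (9:ℚ) * LfZ (vTZ t)) ^ m := by
      rw [Finset.sum_eq_multiset_sum, Multiset.map_map]
      refine congrArg Multiset.sum (Multiset.map_congr rfl fun t _ => ?_)
      simp only [Function.comp_apply]
      rw [LfZ_nrmZ_pow _ hme, LfZ_mul9]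
    rw [hP1, hT1, ← Multiset.sum_add, ← Multiset.map_add, key, Multiset.map_add,
      Multiset.sum_add, hP2, hT2]
    simp only [mul_pow, ← Finset.mul_sum]
    have hc : (C ((9:ℚ)⁻¹) ^ m * C (9:ℚ) ^ m : MvPolynomial (Fin 9) ℚ) = 1 := by
      rw [← mul_pow, ← C_mul, inv_mul_cancel₀ (by norm_num : (9:ℚ) ≠ 0), C_1, one_pow]
    rw [← mul_add (C (9:ℚ) ^ m), ← mul_assoc (C ((9:ℚ)⁻¹) ^ m), hc, one_mul]
end
end

section
/- For every k ∈ {2, 5, 6, 8, 9, 12}, one has the identity ⟨du_2, du_k⟩* = 2k · u_k as polynomials in the six variables y. -/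
open MvPolynomial

noncomputable section

/-- Restriction to the subspace `S6 = 0`, `x₇ + x₈ = 0`:
substitute `x₆ = -(x₁+⋯+x₅)` and `x₈ = -x₇`, with the remaining
variables `y = (x₁,…,x₅,x₇)`. -/
def subE6 : Fin 8 → MvPolynomial (Fin 6) ℚ :=
  ![X 0, X 1, X 2, X 3, X 4, -(X 0 + X 1 + X 2 + X 3 + X 4), X 5, -X 5]

/-- The basic invariants `u_m` in the six variables `y`, with `u₂ = U₂/12`. -/
def u (m : ℕ) : MvPolynomial (Fin 6) ℚ :=
  if m = 2 then C (1/12 : ℚ) * aeval subE6 (U 2) else aeval subE6 (U m)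

lemma sub0 : subE6 0 = X 0 := rfl
lemma sub1 : subE6 1 = X 1 := rfl
lemma sub2 : subE6 2 = X 2 := rfl
lemma sub3 : subE6 3 = X 3 := rfl
lemma sub4 : subE6 4 = X 4 := rfl
lemma sub5 : subE6 5 = -(X 0 + X 1 + X 2 + X 3 + X 4) := rfl
lemma sub6 : subE6 6 = X 5 := rfl
lemma sub7 : subE6 7 = -X 5 := rfl
lemma v0 : ((0:Fin 8):Nat) = 0 := rfl
lemma v1 : ((1:Fin 8):Nat) = 1 := rfl
lemma v2 : ((2:Fin 8):Nat) = 2 := rfl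
lemma v3 : ((3:Fin 8):Nat) = 3 := rfl
lemma v4 : ((4:Fin 8):Nat) = 4 := rfl
lemma v5 : ((5:Fin 8):Nat) = 5 := rfl
lemma v6 : ((6:Fin 8):Nat) = 6 := rfl
lemma v7 : ((7:Fin 8):Nat) = 7 := rfl
lemma hS6 : aeval subE6 S6 = 0 := by
  simp only [S6, map_add, aeval_X, sub0, sub1, sub2, sub3, sub4, sub5]; ring
lemma h2 : C (1/2:ℚ) * ((X 5 : MvPolynomial (Fin 6) ℚ) - -X 5) = X 5 := by
  rw [sub_neg_eq_add, ← two_mul, ← mul_assoc]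
  rw [show ((2:MvPolynomial (Fin 6) ℚ)) = C 2 from (map_ofNat C 2).symm]
  rw [← C_mul]; norm_num
lemma hU (m : ℕ) : aeval subE6 (U m) =
    ((X 5 - X 0)^m + (-X 5 - X 0)^m) + ((X 5 - X 1)^m + (-X 5 - X 1)^m) +
    ((X 5 - X 2)^m + (-X 5 - X 2)^m) + ((X 5 - X 3)^m + (-X 5 - X 3)^m) +
    ((X 5 - X 4)^m + (-X 5 - X 4)^m) +
    ((X 5 + (X 0 + X 1 + X 2 + X 3 + X 4))^m + (-X 5 + (X 0 + X 1 + X 2 + X 3 + X 4))^m) +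
    ((X 0 + X 1)^m + (X 0 + X 2)^m + (X 0 + X 3)^m + (X 0 + X 4)^m +
     (X 1 + X 2)^m + (X 1 + X 3)^m + (X 1 + X 4)^m +
     (X 2 + X 3)^m + (X 2 + X 4)^m + (X 3 + X 4)^m +
     (X 0 - (X 0 + X 1 + X 2 + X 3 + X 4))^m + (X 1 - (X 0 + X 1 + X 2 + X 3 + X 4))^m +
     (X 2 - (X 0 + X 1 + X 2 + X 3 + X 4))^m + (X 3 - (X 0 + X 1 + X 2 + X 3 + X 4))^m +
     (X 4 - (X 0 + X 1 + X 2 + X 3 + X 4))^m) := by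
  rw [U]
  simp only [map_add, map_sum, map_pow, map_mul, map_sub, map_neg, aeval_X, aeval_C, hS6,
    mul_zero, add_zero, sub_zero, Finset.sum_filter, Fintype.sum_prod_type, Fin.sum_univ_eight,
    Fin.isValue, v0, v1, v2, v3, v4, v5, v6, v7, Nat.reduceLT, reduceIte, if_true, if_false,
    false_and, and_true, true_and, and_false, and_self, MvPolynomial.algebraMap_eq, h2,
    zero_add, add_zero,
    sub0, sub1, sub2, sub3, sub4, sub5, sub6, sub7]
  ring

def E2 : MvPolynomial (Fin 6) ℚ :=
  X 0^2 + X 1^2 + X 2^2 + X 3^2 + X 4^2 + X 5^2 +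
  X 0*X 1 + X 0*X 2 + X 0*X 3 + X 0*X 4 + X 1*X 2 + X 1*X 3 + X 1*X 4 +
  X 2*X 3 + X 2*X 4 + X 3*X 4

lemma h12 : (12 : MvPolynomial (Fin 6) ℚ) * C (1/12 : ℚ) = 1 := by
  rw [show ((12:MvPolynomial (Fin 6) ℚ)) = C 12 from (map_ofNat C 12).symm, ← C_mul]; norm_num

lemma hu2 : u 2 = E2 := by
  rw [u, if_pos rfl, hU, E2]
  linear_combination (X 0^2 + X 1^2 + X 2^2 + X 3^2 + X 4^2 + X 5^2 +
    X 0*X 1 + X 0*X 2 + X 0*X 3 + X 0*X 4 + X 1*X 2 + X 1*X 3 + X 1*X 4 +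
    X 2*X 3 + X 2*X 4 + X 3*X 4 : MvPolynomial (Fin 6) ℚ) * h12

lemma cXsq (i j : Fin 6) :
    coeff (Finsupp.single i 2) ((X j : MvPolynomial (Fin 6) ℚ)^2) = if i = j then 1 else 0 := by
  rw [coeff_X_pow]
  simp [Finsupp.single_eq_single_iff, eq_comm]
lemma cXsq' (i j c : Fin 6) (hij : i ≠ j) :
    coeff (Finsupp.single i 1 + Finsupp.single j 1) ((X c : MvPolynomial (Fin 6) ℚ)^2) = 0 := by
  rw [coeff_X_pow, if_neg]
  rw [show (2:ℕ) = 1 + 1 from rfl, Finsupp.single_add]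
  rw [Finsupp.single_add_single_eq_single_add_single one_ne_zero one_ne_zero]
  rintro (⟨rfl, rfl⟩ | ⟨-, rfl, rfl⟩ | ⟨h, -⟩)
  · exact hij rfl
  · exact hij rfl
  · simp at h
lemma XmulX (a b : Fin 6) :
    (X a * X b : MvPolynomial (Fin 6) ℚ) = monomial (Finsupp.single a 1 + Finsupp.single b 1) 1 := by
  rw [show (X a : MvPolynomial (Fin 6) ℚ) = monomial (Finsupp.single a 1) 1 from rfl,
      show (X b : MvPolynomial (Fin 6) ℚ) = monomial (Finsupp.single b 1) 1 from rfl,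
      monomial_mul, one_mul]
lemma cXX (i a b : Fin 6) (hab : a ≠ b) :
    coeff (Finsupp.single i 2) (X a * X b : MvPolynomial (Fin 6) ℚ) = 0 := by
  rw [XmulX, coeff_monomial, if_neg]
  rw [show (2:ℕ) = 1 + 1 from rfl, Finsupp.single_add]
  rw [Finsupp.single_add_single_eq_single_add_single one_ne_zero one_ne_zero]
  rintro (⟨rfl, rfl⟩ | ⟨-, rfl, rfl⟩ | ⟨h, -⟩)
  · exact hab rfl
  · exact hab rfl
  · simp at h
lemma cXXp (i j a b : Fin 6) (hab : a ≠ b) :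
    coeff (Finsupp.single i 1 + Finsupp.single j 1) (X a * X b : MvPolynomial (Fin 6) ℚ) =
      if (a = i ∧ b = j) ∨ (a = j ∧ b = i) then 1 else 0 := by
  rw [XmulX, coeff_monomial]
  refine if_congr ?_ rfl rfl
  rw [Finsupp.single_add_single_eq_single_add_single one_ne_zero one_ne_zero]
  constructor
  · rintro (⟨rfl,rfl⟩ | ⟨-,rfl,rfl⟩ | ⟨h,-⟩)
    · left; exact ⟨rfl, rfl⟩
    · right; exact ⟨rfl, rfl⟩
    · simp at h
  · rintro (⟨rfl,rfl⟩ | ⟨rfl,rfl⟩)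
    · left; exact ⟨rfl, rfl⟩
    · right; left; exact ⟨rfl, rfl, rfl⟩

lemma vec6_0 (a b c d e f : ℚ) : ![a,b,c,d,e,f] 0 = a := rfl
lemma vec6_1 (a b c d e f : ℚ) : ![a,b,c,d,e,f] 1 = b := rfl
lemma vec6_2 (a b c d e f : ℚ) : ![a,b,c,d,e,f] 2 = c := rfl
lemma vec6_3 (a b c d e f : ℚ) : ![a,b,c,d,e,f] 3 = d := rfl
lemma vec6_4 (a b c d e f : ℚ) : ![a,b,c,d,e,f] 4 = e := rfl
lemma vec6_5 (a b c d e f : ℚ) : ![a,b,c,d,e,f] 5 = f := rfl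

lemma w1_1 {α : Type*} (a : α) (t : Fin 1 → α) : Matrix.vecCons a t 1 = t 0 := rfl
lemma w2_1 {α : Type*} (a : α) (t : Fin 2 → α) : Matrix.vecCons a t 1 = t 0 := rfl
lemma w2_2 {α : Type*} (a : α) (t : Fin 2 → α) : Matrix.vecCons a t 2 = t 1 := rfl
lemma w3_1 {α : Type*} (a : α) (t : Fin 3 → α) : Matrix.vecCons a t 1 = t 0 := rfl
lemma w3_2 {α : Type*} (a : α) (t : Fin 3 → α) : Matrix.vecCons a t 2 = t 1 := rfl
lemma w3_3 {α : Type*} (a : α) (t : Fin 3 → α) : Matrix.vecCons a t 3 = t 2 := rfl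
lemma w4_1 {α : Type*} (a : α) (t : Fin 4 → α) : Matrix.vecCons a t 1 = t 0 := rfl
lemma w4_2 {α : Type*} (a : α) (t : Fin 4 → α) : Matrix.vecCons a t 2 = t 1 := rfl
lemma w4_3 {α : Type*} (a : α) (t : Fin 4 → α) : Matrix.vecCons a t 3 = t 2 := rfl
lemma w4_4 {α : Type*} (a : α) (t : Fin 4 → α) : Matrix.vecCons a t 4 = t 3 := rfl
lemma w5_1 {α : Type*} (a : α) (t : Fin 5 → α) : Matrix.vecCons a t 1 = t 0 := rfl
lemma w5_2 {α : Type*} (a : α) (t : Fin 5 → α) : Matrix.vecCons a t 2 = t 1 := rfl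
lemma w5_3 {α : Type*} (a : α) (t : Fin 5 → α) : Matrix.vecCons a t 3 = t 2 := rfl
lemma w5_4 {α : Type*} (a : α) (t : Fin 5 → α) : Matrix.vecCons a t 4 = t 3 := rfl
lemma w5_5 {α : Type*} (a : α) (t : Fin 5 → α) : Matrix.vecCons a t 5 = t 4 := rfl

/-- The symmetric matrix `G` determined by `u₂(y) = ∑ᵢⱼ Gᵢⱼ yᵢ yⱼ`. -/
def GE6 : Matrix (Fin 6) (Fin 6) ℚ := fun i j =>
  if i = j then coeff (Finsupp.single i 2) (u 2)
  else (1/2) * coeff (Finsupp.single i 1 + Finsupp.single j 1) (u 2)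

/-- The pairing `⟨dp, dq⟩* = ∑ᵢⱼ (∂p/∂yᵢ) (G⁻¹)ᵢⱼ (∂q/∂yⱼ)`. -/
def Gmat : Matrix (Fin 6) (Fin 6) ℚ :=
  !![1, 1/2, 1/2, 1/2, 1/2, 0;
     1/2, 1, 1/2, 1/2, 1/2, 0;
     1/2, 1/2, 1, 1/2, 1/2, 0;
     1/2, 1/2, 1/2, 1, 1/2, 0;
     1/2, 1/2, 1/2, 1/2, 1, 0;
     0, 0, 0, 0, 0, 1]

def Gi : Matrix (Fin 6) (Fin 6) ℚ :=
  !![5/3, -1/3, -1/3, -1/3, -1/3, 0;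
     -1/3, 5/3, -1/3, -1/3, -1/3, 0;
     -1/3, -1/3, 5/3, -1/3, -1/3, 0;
     -1/3, -1/3, -1/3, 5/3, -1/3, 0;
     -1/3, -1/3, -1/3, -1/3, 5/3, 0;
     0, 0, 0, 0, 0, 1]

lemma hG : GE6 = Gmat := by
  ext i j
  fin_cases i <;> fin_cases j <;>
    simp [GE6, Gmat, hu2, E2, coeff_add, cXsq, cXsq', cXX, cXXp, Matrix.cons_val_zero, w1_1, w2_1, w2_2, w3_1, w3_2, w3_3, w4_1, w4_2, w4_3, w4_4, w5_1, w5_2, w5_3, w5_4, w5_5] <;> norm_num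

lemma hGinv : GE6⁻¹ = Gi := by
  rw [hG]
  apply Matrix.inv_eq_right_inv
  ext i j
  fin_cases i <;> fin_cases j <;>
    simp [Gmat, Gi, Matrix.mul_apply, Fin.sum_univ_six, Matrix.cons_val_zero, w1_1, w2_1, w2_2, w3_1, w3_2, w3_3, w4_1, w4_2, w4_3, w4_4, w5_1, w5_2, w5_3, w5_4, w5_5] <;> norm_num

/-- The pairing `⟨dp, dq⟩* = ∑ᵢⱼ (∂p/∂yᵢ) (G⁻¹)ᵢⱼ (∂q/∂yⱼ)`. -/
def pairE6 (p q : MvPolynomial (Fin 6) ℚ) : MvPolynomial (Fin 6) ℚ :=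
  ∑ i : Fin 6, ∑ j : Fin 6, C (GE6⁻¹ i j) * pderiv i p * pderiv j q

lemma hd0 : pderiv 0 (u 2) = 2*X 0 + X 1 + X 2 + X 3 + X 4 := by
  rw [hu2, E2]; simp [pderiv_mul, pderiv_pow]; try ring
lemma hd1 : pderiv 1 (u 2) = X 0 + 2*X 1 + X 2 + X 3 + X 4 := by
  rw [hu2, E2]; simp [pderiv_mul, pderiv_pow]; try ring
lemma hd2 : pderiv 2 (u 2) = X 0 + X 1 + 2*X 2 + X 3 + X 4 := by
  rw [hu2, E2]; simp [pderiv_mul, pderiv_pow]; try ring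
lemma hd3 : pderiv 3 (u 2) = X 0 + X 1 + X 2 + 2*X 3 + X 4 := by
  rw [hu2, E2]; simp [pderiv_mul, pderiv_pow]; try ring
lemma hd4 : pderiv 4 (u 2) = X 0 + X 1 + X 2 + X 3 + 2*X 4 := by
  rw [hu2, E2]; simp [pderiv_mul, pderiv_pow]; try ring
lemma hd5 : pderiv 5 (u 2) = 2*X 5 := by
  rw [hu2, E2]; simp [pderiv_mul, pderiv_pow]; try ring

lemma h3 : (3 : MvPolynomial (Fin 6) ℚ) * C (1/3 : ℚ) = 1 := by
  rw [show ((3:MvPolynomial (Fin 6) ℚ)) = C 3 from (map_ofNat C 3).symm, ← C_mul]; norm_num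
lemma hc53 : (C (5/3 : ℚ) : MvPolynomial (Fin 6) ℚ) = 5 * C (1/3 : ℚ) := by
  rw [show ((5:MvPolynomial (Fin 6) ℚ)) = C 5 from (map_ofNat C 5).symm, ← C_mul]; norm_num
lemma hc13 : (C (-1/3 : ℚ) : MvPolynomial (Fin 6) ℚ) = - C (1/3 : ℚ) := by rw [show (-1/3 : ℚ) = -(1/3) by norm_num, map_neg]

lemma pair_eq (q : MvPolynomial (Fin 6) ℚ) :
    pairE6 (u 2) q = 2 * (X 0 * pderiv 0 q + X 1 * pderiv 1 q + X 2 * pderiv 2 q +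
      X 3 * pderiv 3 q + X 4 * pderiv 4 q + X 5 * pderiv 5 q) := by
  rw [pairE6, hGinv]
  simp only [Fin.sum_univ_six, hd0, hd1, hd2, hd3, hd4, hd5, Gi,
    Matrix.cons_val_zero, w1_1, w2_1, w2_2, w3_1, w3_2, w3_3, w4_1, w4_2, w4_3, w4_4,
    w5_1, w5_2, w5_3, w5_4, w5_5, Matrix.cons_val', Matrix.of_apply,
    hc53, hc13, map_zero, map_one]
  linear_combination (2 * (X 0 * pderiv 0 q + X 1 * pderiv 1 q + X 2 * pderiv 2 q +
    X 3 * pderiv 3 q + X 4 * pderiv 4 q)) * h3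

def eul (p : MvPolynomial (Fin 6) ℚ) : MvPolynomial (Fin 6) ℚ :=
  ∑ j : Fin 6, X j * pderiv j p

lemma eul_expand (p : MvPolynomial (Fin 6) ℚ) :
    eul p = X 0 * pderiv 0 p + X 1 * pderiv 1 p + X 2 * pderiv 2 p +
      X 3 * pderiv 3 p + X 4 * pderiv 4 p + X 5 * pderiv 5 p := by
  simp [eul, Fin.sum_univ_six]

lemma eul_add (p q : MvPolynomial (Fin 6) ℚ) : eul (p + q) = eul p + eul q := by
  simp [eul, mul_add, Finset.sum_add_distrib]

lemma eul_neg (p : MvPolynomial (Fin 6) ℚ) : eul (-p) = -eul p := by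
  simp [eul, Finset.sum_neg_distrib]

lemma eul_sub (p q : MvPolynomial (Fin 6) ℚ) : eul (p - q) = eul p - eul q := by
  simp [sub_eq_add_neg, eul_add, eul_neg]

lemma eul_X (i : Fin 6) : eul (X i) = X i := by
  simp [eul, pderiv_X, Pi.single_apply, mul_ite, mul_one, mul_zero]

lemma eul_pow' (L : MvPolynomial (Fin 6) ℚ) (n : ℕ) :
    eul (L ^ (n+1)) = (n+1 : ℕ) * L^n * eul L := by
  simp only [eul, pderiv_pow, Nat.add_sub_cancel, Finset.mul_sum]
  apply Finset.sum_congr rfl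
  intro j _
  ring

set_option maxHeartbeats 2000000 in
lemma euler (m : ℕ) (hm : m ≠ 0) :
    X 0 * pderiv 0 (aeval subE6 (U m)) + X 1 * pderiv 1 (aeval subE6 (U m)) +
    X 2 * pderiv 2 (aeval subE6 (U m)) + X 3 * pderiv 3 (aeval subE6 (U m)) +
    X 4 * pderiv 4 (aeval subE6 (U m)) + X 5 * pderiv 5 (aeval subE6 (U m)) =
    (m : MvPolynomial (Fin 6) ℚ) * aeval subE6 (U m) := by
  obtain ⟨n, rfl⟩ := Nat.exists_eq_succ_of_ne_zero hm
  rw [← eul_expand, hU]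
  simp only [eul_add, eul_pow', eul_sub, eul_neg, eul_X]
  simp only [pow_succ]
  push_cast
  ring

/-- `⟨du₂, du_k⟩* = 2k · u_k` for each basic degree `k` of `E₆`. -/
theorem E6_pair_u2 :
    ∀ k ∈ ({2, 5, 6, 8, 9, 12} : Finset ℕ),
      pairE6 (u 2) (u k) = C (2 * (k : ℚ)) * u k := by
  intro k hk
  have hgen : ∀ m : ℕ, m ≠ 0 → m ≠ 2 →
      pairE6 (u 2) (u m) = C (2 * (m : ℚ)) * u m := by
    intro m hm0 hm2
    have hum : u m = aeval subE6 (U m) := by rw [u, if_neg hm2]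
    rw [pair_eq, hum, euler m hm0]
    rw [show C (2 * (m:ℚ)) = 2 * (m : MvPolynomial (Fin 6) ℚ) by
      rw [map_mul, C_eq_coe_nat, map_ofNat]]
    ring
  fin_cases hk
  · have hu2' : u 2 = C (1/12 : ℚ) * aeval subE6 (U 2) := by rw [u, if_pos rfl]
    rw [pair_eq, hu2']
    simp only [pderiv_C_mul]
    have e := euler 2 (by norm_num)
    rw [show C (2 * ((2:ℕ):ℚ)) = (4 : MvPolynomial (Fin 6) ℚ) by
      rw [show (2 * ((2:ℕ):ℚ)) = 4 by norm_num]; exact map_ofNat C 4]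
    linear_combination (2 * C (1/12 : ℚ) : MvPolynomial (Fin 6) ℚ) * e
  · exact hgen 5 (by norm_num) (by norm_num)
  · exact hgen 6 (by norm_num) (by norm_num)
  · exact hgen 8 (by norm_num) (by norm_num)
  · exact hgen 9 (by norm_num) (by norm_num)
  · exact hgen 12 (by norm_num) (by norm_num)
end
end
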